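/- Let a, c be nonzero integers and n a positive natural number. The equation a·x = c·w·z^n (in the variables w, x, z) is partition regular over ℚ \ {0} if and only if a/c is an n-th power of a rational number. -/

import Mathlib

lemma aux_exists_nat_pow {n : ℕ} (hn : n ≠ 0) {m : ℕ} (hm : m ≠ 0)
    (h : ∀ p : ℕ, p.Prime → n ∣ m.factorization p) : ∃ k : ℕ, k ^ n = m := by
  refine ⟨Nat.floorRoot n m, Nat.eq_of_factorization_eq
    (pow_ne_zero _ (Nat.floorRoot_ne_zero.2 ⟨hn, hm⟩)) hm fun p => ?_⟩
  rw [Nat.factorization_pow, Finsupp.smul_apply, Nat.factorization_floorRoot,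
    Finsupp.floorDiv_apply]
  by_cases hp : p.Prime
  · simpa [smul_eq_mul, Nat.floorDiv_eq_div] using Nat.mul_div_cancel' (h p hp)
  · simp [Nat.factorization_eq_zero_of_not_prime _ hp]

lemma aux_exists_rat_pow {n : ℕ} (hn : n ≠ 0) {r : ℚ} (hr : 0 < r)
    (h : ∀ p : ℕ, p.Prime → (n : ℤ) ∣ padicValRat p r) : ∃ q : ℚ, q ^ n = r := by
  have hnum : 0 < r.num := Rat.num_pos.2 hr
  have hden : r.den ≠ 0 := r.den_nz
  have hnumabs : r.num.natAbs ≠ 0 := by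
    simpa using hnum.ne'
  have key : ∀ p : ℕ, p.Prime →
      n ∣ r.num.natAbs.factorization p ∧ n ∣ r.den.factorization p := by
    intro p hp
    have hv := h p hp
    rw [padicValRat_def] at hv
    rw [Nat.factorization_def _ hp, Nat.factorization_def _ hp]
    unfold padicValInt at hv
    by_cases hpd : p ∣ r.den
    · have hpn : ¬ p ∣ r.num.natAbs := fun hh =>
        hp.one_lt.ne' (Nat.dvd_one.mp (r.reduced ▸ Nat.dvd_gcd hh hpd))
      have h0 : padicValNat p r.num.natAbs = 0 :=
        padicValNat.eq_zero_of_not_dvd hpn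
      rw [h0] at hv
      constructor
      · simp [h0]
      · have : (n : ℤ) ∣ (padicValNat p r.den : ℤ) := (dvd_neg).1 (by simpa using hv)
        exact_mod_cast this
    · have h0 : padicValNat p r.den = 0 := padicValNat.eq_zero_of_not_dvd hpd
      rw [h0] at hv
      constructor
      · have : (n : ℤ) ∣ (padicValNat p r.num.natAbs : ℤ) := by simpa using hv
        exact_mod_cast this
      · simp [h0]
  obtain ⟨k₁, hk₁⟩ := aux_exists_nat_pow hn hnumabs fun p hp => (key p hp).1
  obtain ⟨k₂, hk₂⟩ := aux_exists_nat_pow hn hden fun p hp => (key p hp).2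
  refine ⟨(k₁ : ℚ) / k₂, ?_⟩
  have hk₂0 : (k₂ : ℚ) ≠ 0 := by
    have : k₂ ≠ 0 := by rintro rfl; simp [zero_pow hn] at hk₂; exact hden hk₂.symm
    exact_mod_cast this
  rw [div_pow]
  have e1 : ((k₁ : ℚ)) ^ n = (r.num : ℚ) := by
    rw [← Nat.cast_pow, hk₁]
    rw [← Int.cast_natCast, Int.natAbs_of_nonneg hnum.le]
  have e2 : ((k₂ : ℚ)) ^ n = (r.den : ℚ) := by rw [← Nat.cast_pow, hk₂]
  rw [e1, e2, Rat.num_div_den]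

/-- The equation `a*x = c*w*z^n` is partition regular over `ℚ \ {0}` if and only if `a/c`
is an `n`-th power of a rational number. -/
theorem stmt_14 (a c : ℤ) (ha : a ≠ 0) (hc : c ≠ 0) (n : ℕ) (hn : 0 < n) :
    (∀ (r : ℕ) (C : ℚ → Fin r), ∃ w x z : ℚ,
      w ≠ 0 ∧ x ≠ 0 ∧ z ≠ 0 ∧
      C w = C x ∧ C x = C z ∧
      (a : ℚ) * x = (c : ℚ) * w * z ^ n) ↔ ∃ q : ℚ, q ^ n = (a : ℚ) / (c : ℚ) := by
  have hA : (a : ℚ) ≠ 0 := Int.cast_ne_zero.2 ha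
  have hC : (c : ℚ) ≠ 0 := Int.cast_ne_zero.2 hc
  have hac : (a : ℚ) / c ≠ 0 := div_ne_zero hA hC
  constructor
  · intro H
    by_contra hq
    push_neg at hq
    by_cases hpn : ∀ p : ℕ, p.Prime → (n : ℤ) ∣ padicValRat p ((a : ℚ) / c)
    · by_cases hpos : 0 < (a : ℚ) / c
      · obtain ⟨q, hq'⟩ := aux_exists_rat_pow hn.ne' hpos hpn
        exact hq q hq'
      have hneg : (a : ℚ) / c < 0 := lt_of_le_of_ne (not_lt.1 hpos) hac
      rcases Nat.even_or_odd n with he | ho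
      · -- sign coloring
        obtain ⟨w, x, z, hw, hx, hz, hwx, hxz, heq⟩ :=
          H 2 (fun q => if 0 < q then 0 else 1)
        have hsign : ∀ u v : ℚ,
            (if 0 < u then (0 : Fin 2) else 1) = (if 0 < v then 0 else 1) →
            (0 < u ↔ 0 < v) := by
          intro u v h
          by_cases h1 : 0 < u <;> by_cases h2 : 0 < v <;> simp [h1, h2] at h ⊢
        have hwx' : 0 < w ↔ 0 < x := hsign _ _ hwx
        have hzpos : 0 < z ^ n := he.pow_pos hz
        have hwx2 : 0 < w / x := by
          rcases lt_trichotomy 0 w with h1 | h1 | h1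
          · exact div_pos h1 (hwx'.1 h1)
          · exact absurd h1.symm hw
          · have h2 : x < 0 := lt_of_le_of_ne (not_lt.1 (fun h => absurd (hwx'.2 h) (asymm h1))) hx
            exact div_pos_of_neg_of_neg h1 h2
        have hrepr : (a : ℚ) / c = (w / x) * z ^ n := by
          rw [div_mul_eq_mul_div, div_eq_div_iff hC hx]
          linear_combination heq
        rw [hrepr] at hneg
        exact absurd (mul_pos hwx2 hzpos) (asymm hneg)
      · have hpos' : 0 < -((a : ℚ) / c) := neg_pos.2 hneg
        have hpn' : ∀ p : ℕ, p.Prime → (n : ℤ) ∣ padicValRat p (-((a : ℚ) / c)) := by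
          intro p hp; rw [padicValRat.neg]; exact hpn p hp
        obtain ⟨q, hq'⟩ := aux_exists_rat_pow hn.ne' hpos' hpn'
        exact hq (-q) (by rw [ho.neg_pow, hq', neg_neg])
    · push_neg at hpn
      obtain ⟨p, hp, hnd⟩ := hpn
      haveI : Fact p.Prime := ⟨hp⟩
      haveI : NeZero n := ⟨hn.ne'⟩
      obtain ⟨w, x, z, hw, hx, hz, hwx, hxz, heq⟩ :=
        H n (fun q => ⟨((padicValRat p q : ZMod n)).val, ZMod.val_lt _⟩)
      have e1 : ((padicValRat p w : ZMod n)) = (padicValRat p x : ZMod n) :=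
        ZMod.val_injective n (congrArg Fin.val hwx)
      have hv : padicValRat p ((a : ℚ) * x) = padicValRat p ((c : ℚ) * w * z ^ n) := by
        rw [heq]
      rw [padicValRat.mul hA hx, padicValRat.mul (mul_ne_zero hC hw) (pow_ne_zero _ hz),
        padicValRat.mul hC hw, padicValRat.pow z] at hv
      apply hnd
      rw [padicValRat.div hA hC]
      have h3 := congrArg (fun t : ℤ => (t : ZMod n)) hv
      push_cast at h3
      rw [ZMod.natCast_self, zero_mul, add_zero] at h3
      have h4 : ((padicValRat p (a : ℚ) - padicValRat p (c : ℚ) : ℤ) : ZMod n) = 0 := by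
        push_cast
        rw [sub_eq_zero]
        have := h3
        rw [e1] at this
        exact add_right_cancel this
      exact (ZMod.intCast_zmod_eq_zero_iff_dvd _ _).1 h4
  · rintro ⟨q, hq⟩ r C
    have hq0 : q ≠ 0 := by
      rintro rfl
      rw [zero_pow hn.ne'] at hq
      exact hac hq.symm
    refine ⟨q, q, q, hq0, hq0, hq0, rfl, rfl, ?_⟩
    rw [hq]
    field_simp
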